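/- Let 𝒪 be a discrete Euclidean subring of ℂ of the form 𝒪 = {m + nθ² : m,n ∈ ℤ} where θ ∈ 𝒪 is a unit, and assume all units of 𝒪 have norm 1. Then SL₂(𝒪) is generated by the matrices [[1,1],[0,1]], [[ε,0],[0,conj(ε)]] for ε ranging over all units of 𝒪, and [[0,1],[−1,0]]. -/

import Mathlib

open Matrix

namespace SL2GenAux

def U (x : ℂ) : SpecialLinearGroup (Fin 2) ℂ :=
  ⟨!![1, x; 0, 1], by simp [Matrix.det_fin_two_of]⟩

@[simp] lemma U_coe (x : ℂ) : (U x : Matrix (Fin 2) (Fin 2) ℂ) = !![1, x; 0, 1] := rfl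

lemma U_mul (x y : ℂ) : U x * U y = U (x + y) := by
  ext i j
  fin_cases i <;> fin_cases j <;>
    simp [Matrix.SpecialLinearGroup.coe_mul, Matrix.mul_fin_two, add_comm]

lemma U_zero : U 0 = 1 := by
  ext i j
  fin_cases i <;> fin_cases j <;> simp [U]

def Uhom : Multiplicative ℂ →* SpecialLinearGroup (Fin 2) ℂ where
  toFun x := U x.toAdd
  map_one' := U_zero
  map_mul' _ _ := (U_mul _ _).symm

lemma U_zpow (x : ℂ) (n : ℤ) : U x ^ n = U (n * x) := by
  have h := map_zpow Uhom (Multiplicative.ofAdd x) n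
  simp only [Uhom, MonoidHom.coe_mk, OneHom.coe_mk, toAdd_ofAdd] at h
  rw [← h]
  congr 1
  simp [← ofAdd_zsmul]

lemma finite_small (O : Subring ℂ)
    (hdisc : ∃ ε : ℝ, 0 < ε ∧ ∀ z ∈ O, z ≠ 0 → ε ≤ ‖z‖)
    (C : ℝ) : {z : ℂ | z ∈ O ∧ Complex.normSq z < C}.Finite := by
  obtain ⟨ε, hε, hsep⟩ := hdisc
  haveI hdT : DiscreteTopology ((O : Set ℂ)) := by
    apply discreteTopology_iff_isOpen_singleton.mpr
    rintro ⟨x, hx⟩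
    have hset : {(⟨x, hx⟩ : (O : Set ℂ))} = (Subtype.val) ⁻¹' (Metric.ball x ε) := by
      ext ⟨y, hy⟩
      simp only [Set.mem_singleton_iff, Set.mem_preimage, Metric.mem_ball, Subtype.mk.injEq]
      constructor
      · rintro rfl; simpa using hε
      · intro h
        by_contra hne
        have hmem : y - x ∈ O := sub_mem hy hx
        have h1 := hsep _ hmem (sub_ne_zero.mpr hne)
        rw [Complex.dist_eq] at h
        linarith
    rw [hset]
    exact (Metric.isOpen_ball).preimage continuous_subtype_val
  haveI hdT' : DiscreteTopology (O.toAddSubgroup) := hdT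
  have hclosed : IsClosed ((O : Set ℂ)) := by
    have := AddSubgroup.isClosed_of_discrete (H := O.toAddSubgroup)
    simpa using this
  have hsub : {z : ℂ | z ∈ O ∧ Complex.normSq z < C}
      ⊆ Metric.closedBall 0 (Real.sqrt C) ∩ (O : Set ℂ) := by
    rintro z ⟨hz, hzC⟩
    refine ⟨?_, hz⟩
    simp only [Metric.mem_closedBall, Complex.dist_eq, sub_zero]
    rw [Complex.norm_def]
    exact Real.sqrt_le_sqrt hzC.le
  exact (Metric.finite_isBounded_inter_isClosed DiscreteTopology.isDiscrete Metric.isBounded_closedBall hclosed).subset hsub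

end SL2GenAux

open SL2GenAux

/-- Let `𝒪` be a discrete Euclidean subring of `ℂ` of the form `𝒪 = {m + nθ² : m,n ∈ ℤ}`
where `θ ∈ 𝒪` is a unit, and assume all units of `𝒪` have norm `1`.  Then `SL₂(𝒪)`
(realized as the subgroup of `SL₂(ℂ)` of matrices with all entries in `𝒪`) is generated
by the matrices `[[1,1],[0,1]]`, `[[ε,0],[0,conj ε]]` for `ε` ranging over all units of
`𝒪`, and `[[0,1],[−1,0]]`. -/
theorem SL2_order_generators (O : Subring ℂ) (θ : ℂ)
    (hθO : θ ∈ O) (hθunit : ∃ ν ∈ O, θ * ν = 1 ∧ ν * θ = 1)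
    (hform : ∀ z : ℂ, z ∈ O ↔ ∃ m n : ℤ, z = (m : ℂ) + (n : ℂ) * θ ^ 2)
    (hdisc : ∃ ε : ℝ, 0 < ε ∧ ∀ z ∈ O, z ≠ 0 → ε ≤ ‖z‖)
    (heucl : ∀ a ∈ O, ∀ b ∈ O, b ≠ 0 → ∃ q ∈ O, ∃ r ∈ O,
      a = q * b + r ∧ Complex.normSq r < Complex.normSq b)
    (hunits : ∀ u ∈ O, (∃ v ∈ O, u * v = 1) → Complex.normSq u = 1)
    (A : SpecialLinearGroup (Fin 2) ℂ)
    (hA : ∀ i j, (A : Matrix (Fin 2) (Fin 2) ℂ) i j ∈ O) :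
    A ∈ Subgroup.closure {B : SpecialLinearGroup (Fin 2) ℂ |
      (B : Matrix (Fin 2) (Fin 2) ℂ) = !![1, 1; 0, 1] ∨
      (B : Matrix (Fin 2) (Fin 2) ℂ) = !![0, 1; -1, 0] ∨
      ∃ ε : ℂ, ε ∈ O ∧ (∃ v ∈ O, ε * v = 1) ∧
        (B : Matrix (Fin 2) (Fin 2) ℂ) = !![ε, 0; 0, starRingEnd ℂ ε]} := by
  classical
  obtain ⟨ν, hνO, hθν, hνθ⟩ := hθunit
  set H := Subgroup.closure {B : SpecialLinearGroup (Fin 2) ℂ |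
      (B : Matrix (Fin 2) (Fin 2) ℂ) = !![1, 1; 0, 1] ∨
      (B : Matrix (Fin 2) (Fin 2) ℂ) = !![0, 1; -1, 0] ∨
      ∃ ε : ℂ, ε ∈ O ∧ (∃ v ∈ O, ε * v = 1) ∧
        (B : Matrix (Fin 2) (Fin 2) ℂ) = !![ε, 0; 0, starRingEnd ℂ ε]} with hHdef
  -- basic facts about θ
  have hθconj : θ * starRingEnd ℂ θ = 1 := by
    rw [Complex.mul_conj]
    norm_cast
    exact hunits θ hθO ⟨ν, hνO, hθν⟩
  have hνval : ν = starRingEnd ℂ θ := by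
    calc ν = ν * (θ * starRingEnd ℂ θ) := by rw [hθconj, mul_one]
    _ = (ν * θ) * starRingEnd ℂ θ := by ring
    _ = starRingEnd ℂ θ := by rw [hνθ, one_mul]
  -- generators
  have hT : U 1 ∈ H := Subgroup.subset_closure (Or.inl rfl)
  have hSmdet : Matrix.det !![(0:ℂ), 1; -1, 0] = 1 := by norm_num [Matrix.det_fin_two_of]
  set Sm : SpecialLinearGroup (Fin 2) ℂ := ⟨_, hSmdet⟩ with hSmdef
  have hSm : Sm ∈ H := Subgroup.subset_closure (Or.inr (Or.inl rfl))
  have hdiag : ∀ B : SpecialLinearGroup (Fin 2) ℂ, ∀ u ∈ O, (∃ v ∈ O, u * v = 1) →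
      (B : Matrix (Fin 2) (Fin 2) ℂ) = !![u, 0; 0, starRingEnd ℂ u] → B ∈ H :=
    fun B u hu huv hB => Subgroup.subset_closure (Or.inr (Or.inr ⟨u, hu, huv, hB⟩))
  -- U (θ^2) ∈ H
  have hDθdet : Matrix.det !![θ, 0; 0, starRingEnd ℂ θ] = 1 := by
    simp [Matrix.det_fin_two_of, hθconj]
  set Dθ : SpecialLinearGroup (Fin 2) ℂ := ⟨_, hDθdet⟩ with hDθdef
  have hEθdet : Matrix.det !![starRingEnd ℂ θ, 0; 0, θ] = 1 := by
    simp [Matrix.det_fin_two_of, mul_comm, hθconj]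
  set Eθ : SpecialLinearGroup (Fin 2) ℂ := ⟨_, hEθdet⟩ with hEθdef
  have hDθ : Dθ ∈ H := hdiag Dθ θ hθO ⟨ν, hνO, hθν⟩ rfl
  have hEθ : Eθ ∈ H := by
    refine hdiag Eθ (starRingEnd ℂ θ) (hνval ▸ hνO) ⟨θ, hθO, by rw [mul_comm]; exact hθconj⟩ ?_
    simp [hEθdef, Complex.conj_conj]
  have hUθ2 : U (θ ^ 2) ∈ H := by
    have heq : Dθ * U 1 * Eθ = U (θ ^ 2) := by
      ext i j
      rw [Matrix.SpecialLinearGroup.coe_mul, Matrix.SpecialLinearGroup.coe_mul]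
      fin_cases i <;> fin_cases j <;>
        simp [hDθdef, hEθdef, Matrix.SpecialLinearGroup.coe_mul, Matrix.mul_fin_two, hθconj, mul_comm, sq]
    rw [← heq]
    exact H.mul_mem (H.mul_mem hDθ hT) hEθ
  -- all unipotents with entry in O
  have hUO : ∀ x ∈ O, U x ∈ H := by
    intro x hx
    obtain ⟨m, n, hmn⟩ := (hform x).mp hx
    have : U x = U 1 ^ m * U (θ ^ 2) ^ n := by
      rw [U_zpow, U_zpow, mul_one, U_mul, ← hmn]
    rw [this]
    exact H.mul_mem (H.zpow_mem hT m) (H.zpow_mem hUθ2 n)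
  have hfin := SL2GenAux.finite_small O hdisc
  -- main induction
  have key : ∀ n : ℕ, ∀ B : SpecialLinearGroup (Fin 2) ℂ,
      (∀ i j, (B : Matrix (Fin 2) (Fin 2) ℂ) i j ∈ O) →
      {z : ℂ | z ∈ O ∧ Complex.normSq z <
        Complex.normSq ((B : Matrix (Fin 2) (Fin 2) ℂ) 1 0)}.ncard ≤ n →
      B ∈ H := by
    intro n
    induction n using Nat.strong_induction_on with
    | _ n IH =>
    intro B hB hcard
    set a := (B : Matrix (Fin 2) (Fin 2) ℂ) 0 0 with ha
    set b := (B : Matrix (Fin 2) (Fin 2) ℂ) 0 1 with hb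
    set c := (B : Matrix (Fin 2) (Fin 2) ℂ) 1 0 with hc
    set d := (B : Matrix (Fin 2) (Fin 2) ℂ) 1 1 with hd
    have hBeta : (B : Matrix (Fin 2) (Fin 2) ℂ) = !![a, b; c, d] := Matrix.eta_fin_two _
    have hdet : a * d - b * c = 1 := by
      have hp := B.property
      rwa [Matrix.det_fin_two] at hp
    by_cases hc0 : c = 0
    · -- upper triangular case
      have had : a * d = 1 := by
        rw [hc0] at hdet; simpa using hdet
      have ha0 : a ≠ 0 := fun h => by simp [h] at had
      have h2 : a * starRingEnd ℂ a = 1 := by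
        rw [Complex.mul_conj]
        norm_cast
        exact hunits a (hB 0 0) ⟨d, hB 1 1, had⟩
      have haconj : starRingEnd ℂ a = d := mul_left_cancel₀ ha0 (h2.trans had.symm)
      have hDadet : Matrix.det !![a, 0; 0, starRingEnd ℂ a] = 1 := by
        simp [Matrix.det_fin_two_of, h2]
      set Da : SpecialLinearGroup (Fin 2) ℂ := ⟨_, hDadet⟩ with hDadef
      have hDa : Da ∈ H := hdiag _ a (hB 0 0) ⟨d, hB 1 1, had⟩ rfl
      have hBeq : B = Da * U (d * b) := by
        apply Subtype.ext
        have hcoe : ((Da * U (d * b) : SpecialLinearGroup (Fin 2) ℂ) : Matrix (Fin 2) (Fin 2) ℂ)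
            = !![a, 0; 0, starRingEnd ℂ a] * !![1, d * b; 0, 1] := rfl
        rw [hcoe, hBeta]
        ext i j
        fin_cases i <;> fin_cases j <;>
          simp [Matrix.mul_fin_two, haconj, hc0] <;>
          rw [← mul_assoc, had, one_mul]
      rw [hBeq]
      exact H.mul_mem hDa (hUO _ (mul_mem (hB 1 1) (hB 0 1)))
    · -- Euclidean step
      obtain ⟨q, hqO, r, hrO, hqr, hlt⟩ := heucl a (hB 0 0) c (hB 1 0) hc0
      set B' := Sm * U (-q) * B with hB'def
      have hB'mat : (B' : Matrix (Fin 2) (Fin 2) ℂ) = !![c, d; q * c - a, q * d - b] := by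
        have : (B' : Matrix (Fin 2) (Fin 2) ℂ)
            = !![(0:ℂ), 1; -1, 0] * (!![1, -q; 0, 1] * !![a, b; c, d]) := by
          rw [hB'def, Matrix.SpecialLinearGroup.coe_mul, Matrix.SpecialLinearGroup.coe_mul,
            hBeta, mul_assoc]
          rfl
        rw [this]
        ext i j
        fin_cases i <;> fin_cases j <;> simp [Matrix.mul_fin_two] <;> ring
      have hB'O : ∀ i j, (B' : Matrix (Fin 2) (Fin 2) ℂ) i j ∈ O := by
        intro i j
        rw [hB'mat]
        fin_cases i <;> fin_cases j
        · exact hB 1 0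
        · exact hB 1 1
        · exact sub_mem (mul_mem hqO (hB 1 0)) (hB 0 0)
        · exact sub_mem (mul_mem hqO (hB 1 1)) (hB 0 1)
      have hB'10 : (B' : Matrix (Fin 2) (Fin 2) ℂ) 1 0 = -r := by
        rw [hB'mat]
        show q * c - a = -r
        rw [hqr]; ring
      have hcard' : {z : ℂ | z ∈ O ∧ Complex.normSq z <
          Complex.normSq ((B' : Matrix (Fin 2) (Fin 2) ℂ) 1 0)}.ncard < n := by
        rw [hB'10, Complex.normSq_neg]
        have hss : {z : ℂ | z ∈ O ∧ Complex.normSq z < Complex.normSq r}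
            ⊂ {z : ℂ | z ∈ O ∧ Complex.normSq z < Complex.normSq c} := by
          constructor
          · exact fun z hz => ⟨hz.1, hz.2.trans hlt⟩
          · intro hsup
            exact absurd (hsup ⟨hrO, hlt⟩).2 (lt_irrefl _)
        have hlt2 := Set.ncard_lt_ncard hss (hfin _)
        omega
      have hB'H : B' ∈ H := IH _ hcard' B' hB'O (le_refl _)
      have hBeq : B = U q * Sm⁻¹ * B' := by
        rw [hB'def, mul_assoc (U q) Sm⁻¹, mul_assoc Sm (U (-q)) B, inv_mul_cancel_left,
          ← mul_assoc, U_mul, add_neg_cancel, U_zero, one_mul]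
      rw [hBeq]
      exact H.mul_mem (H.mul_mem (hUO q hqO) (H.inv_mem hSm)) hB'H
  exact key _ A hA (le_refl _)
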